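/- arXiv:1104.1997 — 6 statements merged into one kernel-verified Lean document; each statement's English description precedes it below -/
import Mathlib

section
/- Let t be an integer with t ≥ 3 and let c be a real number with 0 ≤ c ≤ c_t⁽⁰⁾ = (1/2)(1 - 2^{3/2}/((t+1)·sin(π/(t+1)))). Then the equation (t+1)·sin(π/(t+1))·(1 - c·x) = x^{3/2}·sin(π/x) has exactly one solution x with x ≥ 2. -/
open Real

/-- For an integer `t ≥ 3` and `0 ≤ c ≤ c_t⁽⁰⁾`, the equation
`(t+1)·sin(π/(t+1))·(1 - cx) = x^{3/2}·sin(π/x)` has exactly one solution `x ≥ 2`. -/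
theorem ft_existsUnique (t : ℤ) (ht : 3 ≤ t) (c : ℝ) (hc0 : 0 ≤ c)
    (hc1 : c ≤ (1 / 2) * (1 - 2 ^ ((3 : ℝ) / 2) /
      (((t : ℝ) + 1) * Real.sin (π / ((t : ℝ) + 1))))) :
    ∃! x : ℝ, 2 ≤ x ∧
      ((t : ℝ) + 1) * Real.sin (π / ((t : ℝ) + 1)) * (1 - c * x)
        = x ^ ((3 : ℝ) / 2) * Real.sin (π / x) := by
  have hpi := Real.pi_pos
  set S : ℝ := ((t : ℝ) + 1) * Real.sin (π / ((t : ℝ) + 1)) with hSdef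
  have ht1 : (4 : ℝ) ≤ (t : ℝ) + 1 := by
    have : (3 : ℝ) ≤ (t : ℝ) := by exact_mod_cast ht
    linarith
  have hSpos : 0 < S := by
    rw [hSdef]
    apply mul_pos (by linarith)
    apply Real.sin_pos_of_pos_of_lt_pi
    · positivity
    · rw [div_lt_iff₀ (by linarith)]
      nlinarith
  clear_value S
  set K : ℝ := (2 : ℝ) ^ ((3 : ℝ) / 2) with hKdef
  have hK2 : (2 : ℝ) ≤ K := by
    rw [hKdef]
    have h1 : (2 : ℝ) ^ (1 : ℝ) ≤ (2 : ℝ) ^ ((3 : ℝ) / 2) :=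
      Real.rpow_le_rpow_of_exponent_le (by norm_num) (by norm_num)
    rwa [Real.rpow_one] at h1
  clear_value K
  have hKS : K ≤ S := by
    have h := hc0.trans hc1
    have h2 : K / S ≤ 1 := by linarith
    rwa [div_le_one hSpos] at h2
  have hS2 : (2 : ℝ) ≤ S := hK2.trans hKS
  -- the function h
  set g : ℝ → ℝ := fun x => x ^ ((3 : ℝ) / 2) * Real.sin (π / x) with hgdef
  set h : ℝ → ℝ := fun x => S * (1 - c * x) - g x with hhdef
  -- continuity on Ici 2
  have hne : ∀ x : ℝ, x ∈ Set.Ici (2 : ℝ) → x ≠ 0 := fun x hx =>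
    ne_of_gt (lt_of_lt_of_le two_pos hx)
  have hcont : ContinuousOn h (Set.Ici (2 : ℝ)) := by
    rw [hhdef, hgdef]
    apply ContinuousOn.sub
    · exact continuousOn_const.mul (continuousOn_const.sub
        (continuousOn_const.mul continuousOn_id))
    · apply ContinuousOn.mul
      · exact ContinuousOn.rpow_const continuousOn_id (fun x hx => Or.inl (hne x hx))
      · exact Real.continuous_sin.comp_continuousOn
          (continuousOn_const.div continuousOn_id hne)
  -- strict antitonicity
  have hanti : StrictAntiOn h (Set.Ici (2 : ℝ)) := by
    apply strictAntiOn_of_deriv_neg (convex_Ici 2) hcont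
    intro x hx
    rw [interior_Ici] at hx
    have hx2 : (2 : ℝ) < x := hx
    have hx0 : (0 : ℝ) < x := by linarith
    -- derivatives
    have d1 : HasDerivAt (fun y : ℝ => y ^ ((3 : ℝ) / 2))
        ((3 / 2) * x ^ ((3 : ℝ) / 2 - 1)) x :=
      Real.hasDerivAt_rpow_const (Or.inl hx0.ne')
    have d2 : HasDerivAt (fun y : ℝ => π / y) (π * -(x ^ 2)⁻¹) x := by
      have := (hasDerivAt_inv hx0.ne').const_mul π
      simpa [div_eq_mul_inv] using this
    have d3 : HasDerivAt (fun y : ℝ => Real.sin (π / y))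
        (Real.cos (π / x) * (π * -(x ^ 2)⁻¹)) x :=
      (Real.hasDerivAt_sin (π / x)).comp x d2
    have dg : HasDerivAt (fun y : ℝ => y ^ ((3 : ℝ) / 2) * Real.sin (π / y))
        ((3 / 2) * x ^ ((3 : ℝ) / 2 - 1) * Real.sin (π / x)
          + x ^ ((3 : ℝ) / 2) * (Real.cos (π / x) * (π * -(x ^ 2)⁻¹))) x := d1.mul d3
    have dlin : HasDerivAt (fun y : ℝ => S * (1 - c * y)) (S * (0 - c * 1)) x :=
      ((hasDerivAt_const x (1 : ℝ)).sub ((hasDerivAt_id x).const_mul c)).const_mul S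
    have dh : HasDerivAt h
        (S * (0 - c * 1) - ((3 / 2) * x ^ ((3 : ℝ) / 2 - 1) * Real.sin (π / x)
          + x ^ ((3 : ℝ) / 2) * (Real.cos (π / x) * (π * -(x ^ 2)⁻¹)))) x := by
      rw [hhdef, hgdef]
      exact dlin.sub dg
    rw [dh.deriv]
    -- rpow algebra
    have ha : 0 < x ^ ((1 : ℝ) / 2) := Real.rpow_pos_of_pos hx0 _
    set a : ℝ := x ^ ((1 : ℝ) / 2) with hadef
    have hx32 : x ^ ((3 : ℝ) / 2) = a * x := by
      rw [hadef, show ((3 : ℝ) / 2) = (1 : ℝ) / 2 + 1 by norm_num,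
        Real.rpow_add hx0, Real.rpow_one]
    have hx12 : x ^ ((3 : ℝ) / 2 - 1) = a := by rw [hadef]; norm_num
    clear_value a
    set u : ℝ := π / x with hudef
    have hu0 : 0 < u := div_pos hpi hx0
    have hu2 : u < π / 2 := by
      rw [hudef, div_lt_div_iff₀ hx0 two_pos]
      nlinarith
    clear_value u
    have hsinu : 0 < Real.sin u :=
      Real.sin_pos_of_pos_of_lt_pi hu0 (hu2.trans (by linarith))
    have hcosu : 0 < Real.cos u := Real.cos_pos_of_mem_Ioo ⟨by linarith, hu2⟩
    have htan : u < Real.tan u := Real.lt_tan hu0 hu2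
    have hkey : u * Real.cos u < Real.sin u := by
      rw [Real.tan_eq_sin_div_cos, lt_div_iff₀ hcosu] at htan
      exact htan
    have hterm : x ^ ((3 : ℝ) / 2) * (Real.cos u * (π * -(x ^ 2)⁻¹))
        = -(a * (u * Real.cos u)) := by
      rw [hx32, hudef]
      field_simp
    rw [hterm, hx12]
    have hSc : 0 ≤ S * c := mul_nonneg hSpos.le hc0
    nlinarith [mul_pos ha hsinu, mul_lt_mul_of_pos_left hkey ha]
  -- value at 2
  have hh2 : 0 ≤ h 2 := by
    have hcineq : K ≤ (1 - 2 * c) * S := by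
      have h2 : K / S ≤ 1 - 2 * c := by linarith
      exact (div_le_iff₀ hSpos).mp h2
    have hval : h 2 = S * (1 - c * 2) - K := by
      rw [hhdef, hgdef]
      simp only [hKdef]
      rw [Real.sin_pi_div_two]
      ring
    rw [hval]
    nlinarith
  -- value at X = S^2
  have hX2 : (2 : ℝ) ≤ S ^ 2 := by nlinarith
  have hXpos : (0 : ℝ) < S ^ 2 := by nlinarith
  have hXroot : (S ^ 2 : ℝ) ^ ((1 : ℝ) / 2) = S := by
    rw [← Real.rpow_natCast S 2, ← Real.rpow_mul hSpos.le]
    norm_num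
  have hX32 : (S ^ 2 : ℝ) ^ ((3 : ℝ) / 2) = S * S ^ 2 := by
    rw [show ((3 : ℝ) / 2) = (1 : ℝ) / 2 + 1 by norm_num, Real.rpow_add hXpos,
      Real.rpow_one, hXroot]
  have hgX : 2 * S ≤ g (S ^ 2) := by
    have hsinX : 2 / π * (π / S ^ 2) ≤ Real.sin (π / S ^ 2) := by
      apply Real.mul_le_sin (le_of_lt (div_pos hpi hXpos))
      rw [div_le_div_iff₀ hXpos two_pos]
      exact mul_le_mul_of_nonneg_left hX2 hpi.le
    have h1 : 2 / π * (π / S ^ 2) = 2 / S ^ 2 := by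
      field_simp
    rw [h1] at hsinX
    have hgval : g (S ^ 2) = (S ^ 2 : ℝ) ^ ((3 : ℝ) / 2) * Real.sin (π / S ^ 2) := by
      rw [hgdef]
    rw [hgval, hX32]
    have h2 : S * S ^ 2 * (2 / S ^ 2) ≤ S * S ^ 2 * Real.sin (π / S ^ 2) := by
      apply mul_le_mul_of_nonneg_left hsinX
      positivity
    have h3 : S * S ^ 2 * (2 / S ^ 2) = 2 * S := by
      field_simp
    linarith
  have hhX : h (S ^ 2) < 0 := by
    have hcX : 0 ≤ c * S ^ 2 := mul_nonneg hc0 hXpos.le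
    have hval : h (S ^ 2) = S * (1 - c * S ^ 2) - g (S ^ 2) := by rw [hhdef]
    rw [hval]
    nlinarith
  -- intermediate value theorem
  have hsub : Set.Icc (2 : ℝ) (S ^ 2) ⊆ Set.Ici 2 := Set.Icc_subset_Ici_self
  have hmem : (0 : ℝ) ∈ Set.Icc (h (S ^ 2)) (h 2) := ⟨hhX.le, hh2⟩
  obtain ⟨x, hxmem, hxz⟩ := intermediate_value_Icc' hX2 (hcont.mono hsub) hmem
  refine ⟨x, ⟨hxmem.1, ?_⟩, ?_⟩
  · have hval : h x = S * (1 - c * x) - x ^ ((3 : ℝ) / 2) * Real.sin (π / x) := by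
      rw [hhdef, hgdef]
    rw [hval] at hxz
    linarith
  · rintro y ⟨hy2, hyeq⟩
    have hyz : h y = 0 := by
      have hval : h y = S * (1 - c * y) - y ^ ((3 : ℝ) / 2) * Real.sin (π / y) := by
        rw [hhdef, hgdef]
      rw [hval, hyeq]
      ring
    exact hanti.injOn hy2 (hsub hxmem) (by rw [hyz, hxz])
end

section
/- Let t be an integer with t ≥ 4. The function f_t is decreasing on [0, c_t⁽⁰⁾]: if 0 ≤ c < c' ≤ c_t⁽⁰⁾ = (1/2)(1 - 2^{3/2}/((t+1)·sin(π/(t+1)))), and x ≥ 2 satisfies (t+1)·sin(π/(t+1))·(1 - c·x) = x^{3/2}·sin(π/x) while x' ≥ 2 satisfies (t+1)·sin(π/(t+1))·(1 - c'·x') = x'^{3/2}·sin(π/x'), then x' < x. -/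
open Real

lemma ft_sin_mul_lt (u u' : ℝ) (hu'0 : 0 < u') (hu'u : u' < u) (huπ : u ≤ π) :
    u' ^ ((3 : ℝ) / 2) * Real.sin u < u ^ ((3 : ℝ) / 2) * Real.sin u' := by
  have hu0 : 0 < u := hu'0.trans hu'u
  have ha : 0 < 1 - u' / u := by
    have : u' / u < 1 := (div_lt_one hu0).2 hu'u
    linarith
  have hb : 0 < u' / u := div_pos hu'0 hu0
  have hconc := strictConcaveOn_sin_Icc.2 (x := 0) (y := u)
    ⟨le_refl 0, Real.pi_pos.le⟩ ⟨hu0.le, huπ⟩ (ne_of_lt hu0) ha hb (by ring)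
  simp only [smul_eq_mul, Real.sin_zero, mul_zero, zero_add] at hconc
  rw [div_mul_cancel₀ _ hu0.ne'] at hconc
  -- hconc : u' / u * Real.sin u < Real.sin u'
  have hA : u' * Real.sin u < u * Real.sin u' := by
    rw [div_mul_eq_mul_div, div_lt_iff₀ hu0] at hconc
    linarith [hconc]
  have hsin : 0 ≤ Real.sin u := Real.sin_nonneg_of_nonneg_of_le_pi hu0.le huπ
  have hB : u' ^ ((1 : ℝ) / 2) < u ^ ((1 : ℝ) / 2) :=
    Real.rpow_lt_rpow hu'0.le hu'u (by norm_num)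
  have hC : (0 : ℝ) ≤ u' ^ ((1 : ℝ) / 2) := Real.rpow_nonneg hu'0.le _
  have hD : 0 ≤ u' * Real.sin u := mul_nonneg hu'0.le hsin
  have h3 : ∀ v : ℝ, 0 < v → v ^ ((3 : ℝ) / 2) = v * v ^ ((1 : ℝ) / 2) := by
    intro v hv
    rw [show (3 : ℝ) / 2 = 1 + 1 / 2 by norm_num, Real.rpow_add hv, Real.rpow_one]
  rw [h3 u hu0, h3 u' hu'0]
  have := mul_lt_mul'' hA hB hD hC
  nlinarith [this]

lemma ft_g_mono (x x' : ℝ) (hx : 2 ≤ x) (hxx' : x < x') :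
    x ^ ((3 : ℝ) / 2) * Real.sin (π / x) < x' ^ ((3 : ℝ) / 2) * Real.sin (π / x') := by
  have hx0 : 0 < x := by linarith
  have hx'0 : 0 < x' := by linarith
  have h1 : 0 < π / x' := div_pos Real.pi_pos hx'0
  have h2 : π / x' < π / x := div_lt_div_of_pos_left Real.pi_pos hx0 hxx'
  have h3 : π / x ≤ π := by
    rw [div_le_iff₀ hx0]; nlinarith [Real.pi_pos]
  have key := ft_sin_mul_lt (π / x) (π / x') h1 h2 h3
  rw [Real.div_rpow Real.pi_pos.le hx0.le, Real.div_rpow Real.pi_pos.le hx'0.le] at key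
  have hp : 0 < π ^ ((3 : ℝ) / 2) := Real.rpow_pos_of_pos Real.pi_pos _
  have ha : 0 < x ^ ((3 : ℝ) / 2) := Real.rpow_pos_of_pos hx0 _
  have hb : 0 < x' ^ ((3 : ℝ) / 2) := Real.rpow_pos_of_pos hx'0 _
  rw [div_mul_eq_mul_div, div_mul_eq_mul_div, div_lt_div_iff₀ hb ha] at key
  -- key : π^{3/2} * sin (π/x) * x^{3/2} < π^{3/2} * sin (π/x') * x'^{3/2}
  have key2 : π ^ ((3 : ℝ) / 2) * (x ^ ((3 : ℝ) / 2) * Real.sin (π / x))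
      < π ^ ((3 : ℝ) / 2) * (x' ^ ((3 : ℝ) / 2) * Real.sin (π / x')) := by
    nlinarith [key]
  exact lt_of_mul_lt_mul_left key2 hp.le

/-- For an integer `t ≥ 4`, the function `f_t` is decreasing on `[0, c_t⁽⁰⁾]`
(solutions being characterized by `x ≥ 2` and
`(t+1)·sin(π/(t+1))·(1 - cx) = x^{3/2}·sin(π/x)`). -/
theorem ft_decreasing (t : ℤ) (ht : 4 ≤ t) (c c' x x' : ℝ)
    (hc0 : 0 ≤ c) (hcc' : c < c')
    (hc'1 : c' ≤ (1 / 2) * (1 - 2 ^ ((3 : ℝ) / 2) /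
      (((t : ℝ) + 1) * Real.sin (π / ((t : ℝ) + 1)))))
    (hx : 2 ≤ x)
    (hxeq : ((t : ℝ) + 1) * Real.sin (π / ((t : ℝ) + 1)) * (1 - c * x)
      = x ^ ((3 : ℝ) / 2) * Real.sin (π / x))
    (hx' : 2 ≤ x')
    (hx'eq : ((t : ℝ) + 1) * Real.sin (π / ((t : ℝ) + 1)) * (1 - c' * x')
      = x' ^ ((3 : ℝ) / 2) * Real.sin (π / x')) :
    x' < x := by
  have ht1 : (1 : ℝ) < (t : ℝ) + 1 := by
    have : (4 : ℝ) ≤ (t : ℝ) := by exact_mod_cast ht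
    linarith
  have hSpos : 0 < ((t : ℝ) + 1) * Real.sin (π / ((t : ℝ) + 1)) := by
    apply mul_pos (by linarith)
    apply Real.sin_pos_of_pos_of_lt_pi
    · exact div_pos Real.pi_pos (by linarith)
    · exact div_lt_self Real.pi_pos ht1
  by_contra hcon
  push_neg at hcon
  rcases eq_or_lt_of_le hcon with heq | hlt
  · subst heq
    have h5 := hxeq.trans hx'eq.symm
    have h6 := mul_left_cancel₀ hSpos.ne' h5
    nlinarith [mul_pos (show (0:ℝ) < c' - c by linarith) (show (0:ℝ) < x by linarith)]
  · have hg := ft_g_mono x x' hx hlt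
    have h5 : ((t : ℝ) + 1) * Real.sin (π / ((t : ℝ) + 1)) * (1 - c * x)
        < ((t : ℝ) + 1) * Real.sin (π / ((t : ℝ) + 1)) * (1 - c' * x') := by
      rw [hxeq, hx'eq]; exact hg
    have h6 := (mul_lt_mul_iff_right₀ hSpos).mp h5
    nlinarith [mul_nonneg hc0 (show (0:ℝ) ≤ x' - x by linarith),
      mul_pos (show (0:ℝ) < c' - c by linarith) (show (0:ℝ) < x' by linarith)]
end

section
/- There is a unique real number x* ≥ 2 satisfying x*^{3/2}·sin(π/x*) = π (numerically x* = 2.15409…), and, writing x_t for the unique solution x ≥ 2 of the equation (t+1)·sin(π/(t+1)) = x^{3/2}·sin(π/x) (so that x_t = f_t(0)), x_t tends to x* as the integer t tends to infinity. -/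
open Real Filter Set Topology

noncomputable def gfun (x : ℝ) : ℝ := x ^ ((3 : ℝ) / 2) * Real.sin (π / x)

lemma gfun_hasDerivAt {x : ℝ} (hx : 2 < x) :
    HasDerivAt gfun
      (3 / 2 * x ^ ((3 : ℝ) / 2 - 1) * Real.sin (π / x)
        + x ^ ((3 : ℝ) / 2) * (Real.cos (π / x) * (π * -(x ^ 2)⁻¹))) x := by
  have hx0 : (0 : ℝ) < x := by linarith
  have h1 : HasDerivAt (fun y : ℝ => y ^ ((3 : ℝ) / 2))
      (3 / 2 * x ^ ((3 : ℝ) / 2 - 1)) x :=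
    Real.hasDerivAt_rpow_const (Or.inl hx0.ne')
  have h2 : HasDerivAt (fun y : ℝ => π / y) (π * -(x ^ 2)⁻¹) x := by
    simpa [div_eq_mul_inv] using (hasDerivAt_inv hx0.ne').const_mul π
  have h3 : HasDerivAt (fun y : ℝ => Real.sin (π / y))
      (Real.cos (π / x) * (π * -(x ^ 2)⁻¹)) x :=
    (Real.hasDerivAt_sin (π / x)).comp x h2
  exact h1.mul h3

lemma gfun_deriv_pos {x : ℝ} (hx : 2 < x) :
    0 < 3 / 2 * x ^ ((3 : ℝ) / 2 - 1) * Real.sin (π / x)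
        + x ^ ((3 : ℝ) / 2) * (Real.cos (π / x) * (π * -(x ^ 2)⁻¹)) := by
  have hx0 : (0 : ℝ) < x := by linarith
  set θ := π / x with hθ
  have hθ0 : 0 < θ := div_pos pi_pos hx0
  have hθlt : θ < π / 2 := by
    rw [hθ, div_lt_div_iff₀ hx0 two_pos]
    nlinarith [pi_pos]
  have hsin : 0 < Real.sin θ := Real.sin_pos_of_pos_of_lt_pi hθ0 (by linarith [pi_pos])
  have hcos : 0 < Real.cos θ := Real.cos_pos_of_mem_Ioo ⟨by linarith, hθlt⟩
  have hkey : θ * Real.cos θ < Real.sin θ := by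
    have := Real.lt_tan hθ0 hθlt
    rw [Real.tan_eq_sin_div_cos, lt_div_iff₀ hcos] at this
    linarith
  have hs : (0 : ℝ) < x ^ ((1 : ℝ) / 2) := Real.rpow_pos_of_pos hx0 _
  have hsplit : x ^ ((3 : ℝ) / 2) = x ^ ((1 : ℝ) / 2) * x := by
    rw [← Real.rpow_add_one hx0.ne' ((1 : ℝ) / 2)]; norm_num
  have hexp : (3 : ℝ) / 2 - 1 = 1 / 2 := by norm_num
  rw [hexp, hsplit]
  have hπ : π = θ * x := by rw [hθ]; field_simp
  have hinv : x * (x ^ 2)⁻¹ = x⁻¹ := by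
    field_simp
  have hxx : x * x⁻¹ = 1 := mul_inv_cancel₀ hx0.ne'
  calc (0:ℝ) < x ^ ((1:ℝ)/2) * (3 / 2 * Real.sin θ - θ * Real.cos θ) := by
        nlinarith
    _ = 3 / 2 * x ^ ((1:ℝ)/2) * Real.sin θ
        + x ^ ((1:ℝ)/2) * x * (Real.cos θ * (π * -(x ^ 2)⁻¹)) := by
        rw [hπ]
        field_simp
        ring

lemma gfun_cont : ContinuousOn gfun (Set.Ici 2) := by
  apply ContinuousOn.mul
  · exact continuousOn_id.rpow_const fun x hx => Or.inl (by
      have : (2:ℝ) ≤ x := hx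
      intro h; simp only [id_eq] at h; rw [h] at this; norm_num at this)
  · exact Real.continuous_sin.comp_continuousOn
      (continuousOn_const.div continuousOn_id fun x hx => by
        have : (2:ℝ) ≤ x := hx; intro h
        rw [h] at this; norm_num at this)

lemma gfun_mono : StrictMonoOn gfun (Set.Ici 2) := by
  apply strictMonoOn_of_deriv_pos (convex_Ici 2) gfun_cont
  intro x hx
  rw [interior_Ici] at hx
  rw [(gfun_hasDerivAt hx).deriv]
  exact gfun_deriv_pos hx

lemma sqrt2_lt : Real.sqrt 2 < 1.5 := by
  nlinarith [Real.sq_sqrt (by norm_num : (0:ℝ) ≤ 2), Real.sqrt_nonneg 2]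

lemma sqrt2_gt : (1.4 : ℝ) < Real.sqrt 2 := by
  nlinarith [Real.sq_sqrt (by norm_num : (0:ℝ) ≤ 2), Real.sqrt_nonneg 2]

lemma gfun_two : gfun 2 = 2 * Real.sqrt 2 := by
  unfold gfun
  rw [Real.sin_pi_div_two, mul_one,
    show (3:ℝ)/2 = 1 + 1/2 by norm_num, Real.rpow_add two_pos, Real.rpow_one,
    ← Real.sqrt_eq_rpow]

lemma gfun_four : gfun 4 = 4 * Real.sqrt 2 := by
  unfold gfun
  have h4 : Real.sqrt 4 = 2 := by
    rw [show (4:ℝ) = 2^2 by norm_num, Real.sqrt_sq (by norm_num : (0:ℝ) ≤ 2)]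
  have : π / 4 = π / 4 := rfl
  rw [show π / 4 = π / 4 from rfl, Real.sin_pi_div_four,
    show (3:ℝ)/2 = 1 + 1/2 by norm_num, Real.rpow_add (by norm_num : (0:ℝ) < 4),
    Real.rpow_one, ← Real.sqrt_eq_rpow, h4]
  ring

lemma gfun_two_lt_pi : gfun 2 < π := by
  rw [gfun_two]
  nlinarith [sqrt2_lt, Real.pi_gt_three]

lemma pi_lt_gfun_four : π < gfun 4 := by
  rw [gfun_four]
  nlinarith [sqrt2_gt, Real.pi_lt_d2]

lemma sin_div_tendsto : Tendsto (fun u : ℝ => Real.sin u / u) (𝓝[≠] (0:ℝ)) (𝓝 1) := by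
  have h := Real.hasDerivAt_sin 0
  rw [Real.cos_zero, hasDerivAt_iff_tendsto_slope] at h
  exact h.congr fun u => by rw [slope_def_field, Real.sin_zero, sub_zero, sub_zero]

lemma h_tendsto :
    Tendsto (fun t : ℕ => ((t : ℝ) + 1) * Real.sin (π / ((t : ℝ) + 1))) atTop (𝓝 π) := by
  have hat : Tendsto (fun t : ℕ => (t : ℝ) + 1) atTop atTop :=
    tendsto_atTop_add_const_right _ 1 tendsto_natCast_atTop_atTop
  have hu : Tendsto (fun t : ℕ => π / ((t : ℝ) + 1)) atTop (𝓝[≠] (0:ℝ)) := by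
    rw [tendsto_nhdsWithin_iff]
    constructor
    · exact tendsto_const_nhds.div_atTop hat
    · filter_upwards with t
      have ht : (0:ℝ) < (t:ℝ) + 1 := by positivity
      exact div_ne_zero Real.pi_ne_zero ht.ne'
  have hcomp := sin_div_tendsto.comp hu
  have heq : (fun t : ℕ => ((t : ℝ) + 1) * Real.sin (π / ((t : ℝ) + 1)))
      = fun t : ℕ => π * ((fun u : ℝ => Real.sin u / u) ∘ fun t : ℕ => π / ((t:ℝ)+1)) t := by
    funext t
    have ht : (0:ℝ) < (t:ℝ) + 1 := by positivity
    simp only [Function.comp]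
    field_simp
  rw [heq]
  simpa using hcomp.const_mul π

/-- There is a unique `x* ≥ 2` with `x*^{3/2}·sin(π/x*) = π`, and the unique
solution `x_t ≥ 2` of `(t+1)·sin(π/(t+1)) = x^{3/2}·sin(π/x)` (that is, `f_t(0)`)
tends to `x*` as the integer `t` tends to infinity. -/
theorem ft_zero_tendsto :
    ∃ xstar : ℝ,
      (2 ≤ xstar ∧ xstar ^ ((3 : ℝ) / 2) * Real.sin (π / xstar) = π) ∧
      (∀ y : ℝ, 2 ≤ y → y ^ ((3 : ℝ) / 2) * Real.sin (π / y) = π → y = xstar) ∧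
      (∀ x : ℕ → ℝ,
        (∀ t : ℕ, 3 ≤ t → 2 ≤ x t ∧
          ((t : ℝ) + 1) * Real.sin (π / ((t : ℝ) + 1))
            = (x t) ^ ((3 : ℝ) / 2) * Real.sin (π / x t)) →
        Tendsto x atTop (nhds xstar)) := by
  obtain ⟨xstar, hmem, hgx⟩ := intermediate_value_Icc (by norm_num : (2:ℝ) ≤ 4)
    (gfun_cont.mono (Icc_subset_Ici_self)) ⟨gfun_two_lt_pi.le, pi_lt_gfun_four.le⟩
  have hxs2 : (2:ℝ) ≤ xstar := hmem.1
  refine ⟨xstar, ⟨hxs2, hgx⟩, ?_, ?_⟩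
  · intro y hy hgy
    exact gfun_mono.injOn hy hxs2 (hgy.trans hgx.symm)
  · intro x hx
    rw [tendsto_order]
    constructor
    · intro a ha
      rcases lt_or_ge a 2 with h2 | h2
      · filter_upwards [eventually_ge_atTop 3] with t ht
        exact lt_of_lt_of_le h2 (hx t ht).1
      · have hga : gfun a < π := hgx ▸ gfun_mono h2 hxs2 ha
        filter_upwards [h_tendsto.eventually (eventually_gt_nhds hga),
          eventually_ge_atTop 3] with t hgt ht3
        obtain ⟨hx2, heq⟩ := hx t ht3
        have hgeq : gfun (x t) = ((t:ℝ)+1) * Real.sin (π/((t:ℝ)+1)) := heq.symm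
        have : gfun a < gfun (x t) := by rw [hgeq]; exact hgt
        exact (gfun_mono.lt_iff_lt h2 hx2).mp this
    · intro a ha
      have ha2 : (2:ℝ) ≤ a := le_of_lt (lt_of_le_of_lt hxs2 ha)
      have hga : π < gfun a := hgx ▸ gfun_mono hxs2 ha2 ha
      filter_upwards [h_tendsto.eventually (eventually_lt_nhds hga),
        eventually_ge_atTop 3] with t hlt ht3
      obtain ⟨hx2, heq⟩ := hx t ht3
      have hgeq : gfun (x t) = ((t:ℝ)+1) * Real.sin (π/((t:ℝ)+1)) := heq.symm
      have : gfun (x t) < gfun a := by rw [hgeq]; exact hlt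
      exact (gfun_mono.lt_iff_lt hx2 ha2).mp this
end

section
/- Let p be a prime, let t be a residue class modulo p with t ≠ 0, let A be a nonempty subset of ℤ/pℤ, and set S = A + t·A. Then max over 1 ≤ r ≤ p-1 of |Σ_{a ∈ A} exp(2πi·a·r/p)| is at least |A|^{3/2}·(p - |S|)/(p·√|S|); equivalently, writing x = |S|/|A| and c = |A|/p, this maximum is at least ((1 - x·c)/√x)·|A|. -/
open Pointwise Real

namespace FBAux

open Finset Complex

noncomputable def zet (p : ℕ) : ℂ := Complex.exp (2 * Real.pi * Complex.I / p)

variable {p : ℕ}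

lemma zet_prim (hp : p ≠ 0) : IsPrimitiveRoot (zet p) p :=
  Complex.isPrimitiveRoot_exp p hp

lemma zet_pow_p (hp : p ≠ 0) : zet p ^ p = 1 := (zet_prim hp).pow_eq_one

lemma zet_pow_mod (hp : p ≠ 0) (m : ℕ) : zet p ^ m = zet p ^ (m % p) := by
  conv_lhs => rw [← Nat.div_add_mod m p, pow_add, pow_mul, zet_pow_p hp, one_pow, one_mul]

noncomputable def psi (p : ℕ) (x : ZMod p) : ℂ := zet p ^ x.val

lemma psi_add [NeZero p] (x y : ZMod p) : psi p (x + y) = psi p x * psi p y := by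
  unfold psi
  rw [← pow_add, ZMod.val_add, ← zet_pow_mod (NeZero.ne p)]

lemma psi_zero [NeZero p] : psi p 0 = 1 := by
  unfold psi
  simp [ZMod.val_zero]

lemma psi_abs (x : ZMod p) : ‖psi p x‖ = 1 := by
  unfold psi zet
  rw [norm_pow]
  have h : 2 * (Real.pi : ℂ) * Complex.I / p = ((2 * Real.pi / p : ℝ) : ℂ) * Complex.I := by
    push_cast; ring
  rw [h, Complex.norm_exp_ofReal_mul_I, one_pow]

lemma psi_conj [NeZero p] (x : ZMod p) : (starRingEnd ℂ) (psi p x) = psi p (-x) := by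
  have h1 : psi p x * psi p (-x) = 1 := by rw [← psi_add, add_neg_cancel, psi_zero]
  rw [← Complex.inv_eq_conj (psi_abs x)]
  exact (inv_eq_of_mul_eq_one_right h1)

lemma sum_psi [NeZero p] (hp : p.Prime) (x : ZMod p) :
    ∑ r : ZMod p, psi p (x * r) = if x = 0 then (p : ℂ) else 0 := by
  split_ifs with hx
  · subst hx
    simp only [zero_mul, psi_zero, Finset.sum_const, Finset.card_univ, ZMod.card, nsmul_eq_mul,
      mul_one]
  · have key : ∑ r : ZMod p, psi p (x * r) = ∑ r : ZMod p, psi p x * psi p (x * r) := by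
      refine Fintype.sum_equiv (Equiv.addLeft (-1)) _ _ ?_
      intro r
      show psi p (x * r) = psi p x * psi p (x * ((-1) + r))
      rw [← psi_add]
      congr 1
      ring
    have hne : psi p x ≠ 1 := by
      have h1 : 0 < x.val := ZMod.val_pos.mpr hx
      exact (zet_prim hp.ne_zero).pow_ne_one_of_pos_of_lt h1.ne' (ZMod.val_lt x)
    have h0 : (psi p x - 1) * ∑ r : ZMod p, psi p (x * r) = 0 := by
      rw [sub_mul, one_mul, Finset.mul_sum, ← key, sub_self]
    rcases mul_eq_zero.mp h0 with h | h
    · exact absurd (sub_eq_zero.mp h) hne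
    · exact h

lemma parseval_c [NeZero p] (hp : p.Prime) (B : Finset (ZMod p)) :
    ∑ r : ZMod p, (∑ b ∈ B, psi p (b * r)) * (starRingEnd ℂ) (∑ b ∈ B, psi p (b * r)) =
      (p : ℂ) * B.card := by
  classical
  have hconj : ∀ r : ZMod p, (starRingEnd ℂ) (∑ b ∈ B, psi p (b * r)) =
      ∑ b ∈ B, psi p (-b * r) := by
    intro r
    rw [map_sum]
    exact Finset.sum_congr rfl fun b _ => by rw [psi_conj, neg_mul]
  calc ∑ r : ZMod p, (∑ b ∈ B, psi p (b * r)) * (starRingEnd ℂ) (∑ b ∈ B, psi p (b * r))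
      = ∑ r : ZMod p, ∑ b ∈ B, ∑ c ∈ B, psi p ((b - c) * r) := by
        refine Finset.sum_congr rfl fun r _ => ?_
        rw [hconj r, Finset.sum_mul_sum]
        refine Finset.sum_congr rfl fun b _ => Finset.sum_congr rfl fun c _ => ?_
        rw [← psi_add]
        congr 1
        ring
    _ = ∑ b ∈ B, ∑ c ∈ B, ∑ r : ZMod p, psi p ((b - c) * r) := by
        rw [Finset.sum_comm]
        refine Finset.sum_congr rfl fun b _ => Finset.sum_comm
    _ = ∑ b ∈ B, ∑ c ∈ B, if b - c = 0 then (p : ℂ) else 0 := by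
        refine Finset.sum_congr rfl fun b _ => Finset.sum_congr rfl fun c _ => sum_psi hp _
    _ = ∑ b ∈ B, ((p : ℂ)) := by
        refine Finset.sum_congr rfl fun b hb => ?_
        have : ∀ c ∈ B, (if b - c = 0 then (p : ℂ) else 0) = if b = c then (p : ℂ) else 0 := by
          intro c _; simp [sub_eq_zero]
        rw [Finset.sum_congr rfl this, Finset.sum_ite_eq B b (fun _ => (p : ℂ)), if_pos hb]
    _ = (p : ℂ) * B.card := by rw [Finset.sum_const, nsmul_eq_mul, mul_comm]

lemma parseval [NeZero p] (hp : p.Prime) (B : Finset (ZMod p)) :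
    ∑ r : ZMod p, (‖∑ b ∈ B, psi p (b * r)‖) ^ 2 = (p : ℝ) * B.card := by
  have h := parseval_c hp B
  have h2 : ∀ r : ZMod p, (∑ b ∈ B, psi p (b * r)) * (starRingEnd ℂ) (∑ b ∈ B, psi p (b * r)) =
      (((‖∑ b ∈ B, psi p (b * r)‖) ^ 2 : ℝ) : ℂ) := by
    intro r
    rw [Complex.mul_conj, Complex.sq_norm]
  rw [Finset.sum_congr rfl fun r _ => h2 r] at h
  have := h
  rw [← Complex.ofReal_sum] at this
  exact_mod_cast this

end FBAux

open FBAux Finset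

/-- The exponential sums lower bound for the Fourier bias of `A`: there is
`1 ≤ r ≤ p-1` with `|Â(r)| ≥ |A|^{3/2}·(p - |S|)/(p·√|S|)` where `S = A + t·A`. -/
theorem fourier_bias_lower_bound (p : ℕ) (hp : p.Prime) (t : ZMod p) (ht : t ≠ 0)
    (A : Finset (ZMod p)) (hA : A.Nonempty) :
    ∃ r : ℕ, 1 ≤ r ∧ r ≤ p - 1 ∧
      (A.card : ℝ) ^ ((3 : ℝ) / 2) * ((p : ℝ) - ((A + t • A).card : ℝ)) /
          ((p : ℝ) * Real.sqrt ((A + t • A).card)) ≤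
        ‖∑ a ∈ A, Complex.exp (2 * Real.pi * Complex.I * (a.val : ℂ) * r / p)‖ := by
  classical
  haveI := Fact.mk hp
  haveI : NeZero p := ⟨hp.ne_zero⟩
  set S : Finset (ZMod p) := A + t • A with hSdef
  set F : ZMod p → ℂ := fun r => ∑ a ∈ A, psi p (a * r) with hF
  set G : ZMod p → ℂ := fun r => ∑ s ∈ S, psi p (s * r) with hG
  have hSne : S.Nonempty := by
    obtain ⟨a, ha⟩ := hA
    exact ⟨a + t * a, Finset.add_mem_add ha (Finset.smul_mem_smul_finset ha)⟩
  -- main identity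
  have main_id : ∑ r : ZMod p, F r * F (t * r) * (starRingEnd ℂ) (G r) =
      (p : ℂ) * (A.card : ℂ) ^ 2 := by
    have hconj : ∀ r : ZMod p, (starRingEnd ℂ) (G r) = ∑ s ∈ S, psi p (-s * r) := by
      intro r
      rw [hG, map_sum]
      exact Finset.sum_congr rfl fun s _ => by rw [psi_conj, neg_mul]
    have expand : ∀ r : ZMod p, F r * F (t * r) * (starRingEnd ℂ) (G r) =
        ∑ a ∈ A, ∑ s ∈ S, ∑ b ∈ A, psi p ((a + t * b - s) * r) := by
      intro r
      rw [hconj r]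
      simp only [hF]
      rw [Finset.sum_mul_sum, Finset.sum_mul_sum]
      refine Finset.sum_congr rfl fun a _ => Finset.sum_congr rfl fun s _ => ?_
      rw [Finset.sum_mul]
      refine Finset.sum_congr rfl fun b _ => ?_
      rw [← psi_add, ← psi_add]
      congr 1
      ring
    calc ∑ r : ZMod p, F r * F (t * r) * (starRingEnd ℂ) (G r)
        = ∑ r : ZMod p, ∑ a ∈ A, ∑ s ∈ S, ∑ b ∈ A, psi p ((a + t * b - s) * r) :=
          Finset.sum_congr rfl fun r _ => expand r
      _ = ∑ a ∈ A, ∑ s ∈ S, ∑ b ∈ A, ∑ r : ZMod p, psi p ((a + t * b - s) * r) := by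
          rw [Finset.sum_comm]
          refine Finset.sum_congr rfl fun a _ => ?_
          rw [Finset.sum_comm]
          refine Finset.sum_congr rfl fun s _ => Finset.sum_comm
      _ = ∑ a ∈ A, ∑ s ∈ S, ∑ b ∈ A, if a + t * b - s = 0 then (p : ℂ) else 0 := by
          refine Finset.sum_congr rfl fun a _ => Finset.sum_congr rfl fun s _ =>
            Finset.sum_congr rfl fun b _ => sum_psi hp _
      _ = ∑ a ∈ A, ∑ b ∈ A, ∑ s ∈ S, if a + t * b - s = 0 then (p : ℂ) else 0 :=
          Finset.sum_congr rfl fun a _ => Finset.sum_comm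
      _ = ∑ a ∈ A, ∑ b ∈ A, (p : ℂ) := by
          refine Finset.sum_congr rfl fun a ha => Finset.sum_congr rfl fun b hb => ?_
          have hmem : a + t * b ∈ S := by
            exact Finset.add_mem_add ha (Finset.smul_mem_smul_finset hb)
          have : ∀ s ∈ S, (if a + t * b - s = 0 then (p : ℂ) else 0) =
              if a + t * b = s then (p : ℂ) else 0 := by
            intro s _; simp [sub_eq_zero]
          rw [Finset.sum_congr rfl this,
            Finset.sum_ite_eq S (a + t * b) (fun _ => (p : ℂ)), if_pos hmem]
      _ = (p : ℂ) * (A.card : ℂ) ^ 2 := by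
          rw [Finset.sum_const, Finset.sum_const, nsmul_eq_mul, nsmul_eq_mul]
          ring
  -- values at 0
  have hF0 : F 0 = (A.card : ℂ) := by
    rw [hF]
    simp [psi_zero]
  have hG0 : G 0 = (S.card : ℂ) := by
    rw [hG]
    simp [psi_zero]
  -- the sum over nonzero r
  have hsum0 : ∑ r ∈ Finset.univ.erase (0 : ZMod p), F r * F (t * r) * (starRingEnd ℂ) (G r) =
      (((A.card : ℝ) ^ 2 * ((p : ℝ) - (S.card : ℝ)) : ℝ) : ℂ) := by
    have h := Finset.sum_erase_add Finset.univ
      (fun r => F r * F (t * r) * (starRingEnd ℂ) (G r)) (Finset.mem_univ (0 : ZMod p))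
    have h0 : F 0 * F (t * 0) * (starRingEnd ℂ) (G 0) =
        (A.card : ℂ) ^ 2 * (S.card : ℂ) := by
      rw [mul_zero, hF0, hG0, map_natCast]
      ring
    have heq : (∑ r ∈ Finset.univ.erase (0 : ZMod p), F r * F (t * r) * (starRingEnd ℂ) (G r)) +
        (A.card : ℂ) ^ 2 * (S.card : ℂ) = (p : ℂ) * (A.card : ℂ) ^ 2 := by
      rw [← h0, h, main_id]
    have : (∑ r ∈ Finset.univ.erase (0 : ZMod p), F r * F (t * r) * (starRingEnd ℂ) (G r)) =
        (p : ℂ) * (A.card : ℂ) ^ 2 - (A.card : ℂ) ^ 2 * (S.card : ℂ) := by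
      linear_combination heq
    rw [this]
    push_cast
    ring
  -- basic positivity
  have hApos : (0 : ℝ) < A.card := by exact_mod_cast Finset.card_pos.mpr hA
  have hSpos : (0 : ℝ) < S.card := by exact_mod_cast Finset.card_pos.mpr hSne
  have hppos : (0 : ℝ) < p := by exact_mod_cast hp.pos
  have hSlep : (S.card : ℝ) ≤ p := by
    have := Finset.card_le_univ S
    rw [ZMod.card] at this
    exact_mod_cast this
  -- Parseval
  have hParA : ∑ r : ZMod p, (‖F r‖) ^ 2 = (p : ℝ) * A.card := parseval hp A
  have hParS : ∑ r : ZMod p, (‖G r‖) ^ 2 = (p : ℝ) * S.card := parseval hp S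
  have hParAt : ∑ r : ZMod p, (‖F (t * r)‖) ^ 2 = (p : ℝ) * A.card := by
    rw [← hParA]
    exact Fintype.sum_equiv (Equiv.mulLeft₀ t ht) _ _ (fun r => rfl)
  -- the maximizer
  have hne0 : (Finset.univ.erase (0 : ZMod p)).Nonempty :=
    ⟨1, Finset.mem_erase.mpr ⟨one_ne_zero, Finset.mem_univ 1⟩⟩
  obtain ⟨r₀, hr₀mem, hr₀max⟩ := Finset.exists_max_image (Finset.univ.erase (0 : ZMod p))
    (fun r => ‖F r‖) hne0
  set M : ℝ := ‖F r₀‖ with hM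
  have hMnonneg : 0 ≤ M := norm_nonneg _
  -- the key inequality chain
  have hK : (A.card : ℝ) ^ 2 * ((p : ℝ) - S.card) ≤
      M * (Real.sqrt ((p : ℝ) * A.card) * Real.sqrt ((p : ℝ) * S.card)) := by
    have h1 : (A.card : ℝ) ^ 2 * ((p : ℝ) - S.card) = ‖
        (∑ r ∈ Finset.univ.erase (0 : ZMod p), F r * F (t * r) * (starRingEnd ℂ) (G r))‖ := by
      rw [hsum0, Complex.norm_real, Real.norm_eq_abs, abs_of_nonneg]
      exact mul_nonneg (sq_nonneg _) (sub_nonneg.mpr hSlep)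
    rw [h1]
    calc ‖(∑ r ∈ Finset.univ.erase (0 : ZMod p),
            F r * F (t * r) * (starRingEnd ℂ) (G r))‖
        ≤ ∑ r ∈ Finset.univ.erase (0 : ZMod p),
            ‖F r * F (t * r) * (starRingEnd ℂ) (G r)‖ :=
          norm_sum_le _ _
      _ = ∑ r ∈ Finset.univ.erase (0 : ZMod p),
            ‖F r‖ * (‖F (t * r)‖ * ‖G r‖) := by
          refine Finset.sum_congr rfl fun r _ => ?_
          rw [norm_mul, norm_mul, Complex.norm_conj, mul_assoc]
      _ ≤ ∑ r ∈ Finset.univ.erase (0 : ZMod p),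
            M * (‖F (t * r)‖ * ‖G r‖) := by
          refine Finset.sum_le_sum fun r hr => ?_
          exact mul_le_mul_of_nonneg_right (hr₀max r hr) (by positivity)
      _ = M * ∑ r ∈ Finset.univ.erase (0 : ZMod p),
            ‖F (t * r)‖ * ‖G r‖ := by rw [Finset.mul_sum]
      _ ≤ M * ∑ r : ZMod p, ‖F (t * r)‖ * ‖G r‖ := by
          refine mul_le_mul_of_nonneg_left ?_ hMnonneg
          exact Finset.sum_le_sum_of_subset_of_nonneg (Finset.erase_subset _ _)
            (fun r _ _ => by positivity)
      _ ≤ M * (Real.sqrt ((p : ℝ) * A.card) * Real.sqrt ((p : ℝ) * S.card)) := by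
          refine mul_le_mul_of_nonneg_left ?_ hMnonneg
          have hcs := Finset.sum_mul_sq_le_sq_mul_sq Finset.univ
            (fun r => ‖F (t * r)‖) (fun r => ‖G r‖)
          have hnn : 0 ≤ ∑ r : ZMod p, ‖F (t * r)‖ * ‖G r‖ :=
            Finset.sum_nonneg fun r _ => by positivity
          calc ∑ r : ZMod p, ‖F (t * r)‖ * ‖G r‖
              = Real.sqrt ((∑ r : ZMod p, ‖F (t * r)‖ * ‖G r‖) ^ 2) :=
                (Real.sqrt_sq hnn).symm
            _ ≤ Real.sqrt ((∑ r : ZMod p, (‖F (t * r)‖) ^ 2) *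
                  (∑ r : ZMod p, (‖G r‖) ^ 2)) := Real.sqrt_le_sqrt hcs
            _ = Real.sqrt ((p : ℝ) * A.card) * Real.sqrt ((p : ℝ) * S.card) := by
                rw [hParAt, hParS, Real.sqrt_mul (by positivity)]
  -- produce the witness
  refine ⟨r₀.val, ?_, ?_, ?_⟩
  · exact ZMod.val_pos.mpr (Finset.mem_erase.mp hr₀mem).1
  · exact Nat.le_sub_one_of_lt (ZMod.val_lt r₀)
  · have hsum_eq : (∑ a ∈ A, Complex.exp
        (2 * Real.pi * Complex.I * (a.val : ℂ) * (r₀.val : ℕ) / p)) = F r₀ := by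
      simp only [hF]
      refine Finset.sum_congr rfl fun a _ => ?_
      have h1 : 2 * (Real.pi : ℂ) * Complex.I * (a.val : ℂ) * ((r₀.val : ℕ) : ℂ) / p =
          ((a.val * r₀.val : ℕ) : ℂ) * (2 * Real.pi * Complex.I / p) := by
        push_cast; ring
      rw [h1, Complex.exp_nat_mul]
      show (zet p) ^ (a.val * r₀.val) = psi p (a * r₀)
      unfold psi
      rw [zet_pow_mod (NeZero.ne p) (a.val * r₀.val), ZMod.val_mul]
    rw [hsum_eq]
    -- final algebra
    have hsA : 0 < Real.sqrt A.card := Real.sqrt_pos.mpr hApos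
    have h32 : (A.card : ℝ) ^ ((3 : ℝ) / 2) = A.card * Real.sqrt A.card := by
      rw [show ((3 : ℝ) / 2) = 1 + 1 / 2 by norm_num, Real.rpow_add hApos, Real.rpow_one,
        ← Real.sqrt_eq_rpow]
    have hAA : Real.sqrt A.card * Real.sqrt A.card = A.card := Real.mul_self_sqrt hApos.le
    have hpp : Real.sqrt (p : ℝ) * Real.sqrt (p : ℝ) = p := Real.mul_self_sqrt hppos.le
    have hD : Real.sqrt ((p : ℝ) * A.card) * Real.sqrt ((p : ℝ) * S.card) =
        (p : ℝ) * Real.sqrt A.card * Real.sqrt S.card := by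
      rw [Real.sqrt_mul hppos.le, Real.sqrt_mul hppos.le]
      linear_combination Real.sqrt (A.card : ℝ) * Real.sqrt (S.card : ℝ) * hpp
    rw [div_le_iff₀ (by positivity : (0 : ℝ) < (p : ℝ) * Real.sqrt (S.card : ℝ))]
    refine le_of_mul_le_mul_right ?_ hsA
    calc (A.card : ℝ) ^ ((3 : ℝ) / 2) * ((p : ℝ) - S.card) * Real.sqrt A.card
        = (A.card : ℝ) ^ 2 * ((p : ℝ) - S.card) := by
          rw [h32]
          linear_combination (A.card : ℝ) * ((p : ℝ) - (S.card : ℝ)) * hAA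
      _ ≤ M * (Real.sqrt ((p : ℝ) * A.card) * Real.sqrt ((p : ℝ) * S.card)) := hK
      _ = M * ((p : ℝ) * Real.sqrt S.card) * Real.sqrt A.card := by rw [hD]; ring
end

section
/- Let η and β be real numbers with 0 ≤ η ≤ 1/√2 and 0 < β ≤ 1/3. If (1/β)·(η + 1 - 2·cos(πβ))/(2·(1 - cos(πβ))) ≥ 2, then β ≥ 1/4. -/
open Real

/-- First part of the Remark after Lev's lemma: if `0 ≤ η ≤ 1/√2`, `0 < β ≤ 1/3` and
`(1/β)·(η + 1 - 2cos(πβ))/(2(1 - cos(πβ))) ≥ 2`, then `β ≥ 1/4`. -/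
theorem remark_first_bound (η β : ℝ) (hη0 : 0 ≤ η) (hη1 : η ≤ 1 / Real.sqrt 2)
    (hβ0 : 0 < β) (hβ1 : β ≤ 1 / 3)
    (h : 2 ≤ (1 / β) * ((η + 1 - 2 * Real.cos (π * β)) / (2 * (1 - Real.cos (π * β))))) :
    1 / 4 ≤ β := by
  by_contra hlt
  push_neg at hlt
  have hπ := Real.pi_pos
  set c := Real.cos (π * β) with hc
  have hx0 : 0 < π * β := by positivity
  have hx2 : π * β < π / 2 := by nlinarith
  -- c < 1
  have hc1 : c < 1 := by
    have := Real.cos_lt_cos_of_nonneg_of_le_pi (by norm_num) (by nlinarith) hx0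
    simpa [Real.cos_zero] using this
  have hden : 0 < 2 * (1 - c) := by linarith
  -- chord inequality from concavity
  have hs : Real.cos (π / 4) = Real.sqrt 2 / 2 := Real.cos_pi_div_four
  have h4β : 4 * β < 1 := by linarith
  have hchord : (1 - 4 * β) * Real.cos 0 + (4 * β) * Real.cos (π / 4)
      ≤ Real.cos ((1 - 4 * β) • (0:ℝ) + (4 * β) • (π / 4)) := by
    apply strictConcaveOn_cos_Icc.concaveOn.2
    · exact ⟨by linarith, by linarith⟩
    · exact ⟨by linarith, by linarith⟩
    · linarith
    · positivity
    · ring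
  have hcomb : (1 - 4 * β) • (0:ℝ) + (4 * β) • (π / 4) = π * β := by
    simp [smul_eq_mul]; ring
  rw [hcomb, Real.cos_zero, hs] at hchord
  have hchord' : 1 - 4 * β + 4 * β * (Real.sqrt 2 / 2) ≤ c := by
    rw [hc]; linarith [hchord]
  -- from h : 4β(1-c) ≤ η + 1 - 2c
  have hkey : 2 * (β * (2 * (1 - c))) ≤ η + 1 - 2 * c := by
    have heq : (1 / β) * ((η + 1 - 2 * c) / (2 * (1 - c)))
        = (η + 1 - 2 * c) / (β * (2 * (1 - c))) := by
      field_simp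
    rw [heq, le_div_iff₀ (by positivity)] at h
    linarith
  have hsq : Real.sqrt 2 ^ 2 = 2 := Real.sq_sqrt (by norm_num)
  have hspos : (0:ℝ) < Real.sqrt 2 := by positivity
  have hη1' : η ≤ Real.sqrt 2 / 2 := by
    have heq2 : (1:ℝ) / Real.sqrt 2 = Real.sqrt 2 / 2 := by
      rw [div_eq_div_iff hspos.ne' (by norm_num : (2:ℝ) ≠ 0)]; nlinarith
    linarith [heq2 ▸ hη1]
  nlinarith [sq_nonneg (4 * β - 1), hchord', hkey]
end

section
/- Let η and β be real numbers with 0 ≤ η ≤ 1/√2 and 0 < β ≤ 1/3, and let u ∈ (0, π] satisfy sin(u)/u = η·sin(πβ)/(πβ) (i.e. u = g⁻¹(η·g(πβ)) where g(u) = sin(u)/u). If π/u ≥ 2, then β ≤ 1/4. -/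
open Real

lemma sin_div_strict {a b : ℝ} (ha : 0 < a) (hab : a < b) (hb : b ≤ π) :
    a / b * Real.sin b < Real.sin a := by
  have hb0 : 0 < b := ha.trans hab
  have ht0 : 0 < a / b := div_pos ha hb0
  have ht1 : a / b < 1 := (div_lt_one hb0).2 hab
  have h := strictConcaveOn_sin_Icc.2 (Set.mem_Icc.2 ⟨le_rfl, pi_pos.le⟩)
    (Set.mem_Icc.2 ⟨hb0.le, hb⟩) hb0.ne (sub_pos.2 ht1) ht0 (by ring)
  rw [smul_eq_mul, smul_eq_mul, Real.sin_zero, smul_zero, zero_add, smul_eq_mul,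
    div_mul_cancel₀ _ hb0.ne'] at h
  simpa using h

/-- Second part of the Remark after Lev's lemma: if `0 ≤ η ≤ 1/√2`, `0 < β ≤ 1/3`,
`u ∈ (0, π]` satisfies `sin(u)/u = η·sin(πβ)/(πβ)` (so `u = g⁻¹(η·g(πβ))`) and
`π/u ≥ 2`, then `β ≤ 1/4`. -/
theorem remark_second_bound (η β u : ℝ) (hη0 : 0 ≤ η) (hη1 : η ≤ 1 / Real.sqrt 2)
    (hβ0 : 0 < β) (hβ1 : β ≤ 1 / 3) (hu0 : 0 < u) (hu1 : u ≤ π)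
    (hgu : Real.sin u / u = η * (Real.sin (π * β) / (π * β)))
    (h : 2 ≤ π / u) :
    β ≤ 1 / 4 := by
  by_contra hc
  push_neg at hc
  set x := π * β with hx
  have hx0 : 0 < x := mul_pos pi_pos hβ0
  have hxgt : π / 4 < x := by
    have := pi_pos
    nlinarith
  have hxle : x ≤ π := by
    have := pi_pos
    nlinarith
  -- strict bound: sin x / x < 2√2/π
  have key := sin_div_strict (a := π / 4) (b := x) (by positivity) hxgt hxle
  rw [Real.sin_pi_div_four] at key
  have hgx : Real.sin x / x < Real.sqrt 2 * 2 / π := by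
    have hπ : (0:ℝ) < π := pi_pos
    rw [div_lt_div_iff₀ hx0 hπ]
    rw [div_div, div_mul_eq_mul_div, div_lt_iff₀ (by positivity : (0:ℝ) < 4 * x)] at key
    nlinarith
  -- lower bound: sin u / u ≥ 2/π
  have huhalf : u ≤ π / 2 := by
    rw [le_div_iff₀ hu0] at h; linarith
  have hlow : 2 / π ≤ Real.sin u / u := by
    rw [le_div_iff₀ hu0]
    exact Real.mul_le_sin hu0.le huhalf
  -- combine
  have hgx0 : 0 ≤ Real.sin x / x :=
    div_nonneg (Real.sin_nonneg_of_nonneg_of_le_pi hx0.le hxle) hx0.le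
  have hs2 : (0:ℝ) < Real.sqrt 2 := by positivity
  have hηg : η * (Real.sin x / x) < 2 / π := by
    calc η * (Real.sin x / x) ≤ (1 / Real.sqrt 2) * (Real.sin x / x) := by
          exact mul_le_mul_of_nonneg_right hη1 hgx0
      _ < (1 / Real.sqrt 2) * (Real.sqrt 2 * 2 / π) := by
          apply mul_lt_mul_of_pos_left hgx (by positivity)
      _ = 2 / π := by
          have h2 : Real.sqrt 2 * Real.sqrt 2 = 2 := Real.mul_self_sqrt (by norm_num)
          rw [one_div, ← mul_div_assoc, ← mul_assoc, inv_mul_cancel₀ hs2.ne', one_mul]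
  rw [hgu] at hlow
  linarith
end
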